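/- In the matrix-decomposition setting below, the derived subalgebra A^(1) of A (the linear span of all commutators [x,y] = xy − yx, x, y ∈ A) equals L; consequently A^(1) is a perfect Lie algebra and A = A^(1)A^(1) + A^(1), where A^(1)A^(1) denotes the linear span of all products xy with x, y ∈ A^(1). -/

import Mathlib

/-! Statement 15: in the matrix-decomposition setting, the derived subalgebra `A⁽¹⁾` equals `L`, is a perfect Lie algebra, and `A = A⁽¹⁾A⁽¹⁾ + A⁽¹⁾`. -/

open scoped TensorProduct DirectSum

universe u v w

/-- `n` extended to `Î = I ∪ {0}` (`none` playing the role of `0`), with `n_0 = 1`. -/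
abbrev nopt {I : Type} (n : I → ℕ) : Option I → ℕ
  | none => 1
  | some i => n i

variable (F : Type u) [Field F] [IsAlgClosed F]
  {I : Type} [Fintype I] [DecidableEq I] [Nonempty I] {n : I → ℕ}
  {Λ : Option I → Option I → Type v}
  [∀ i j, AddCommGroup (Λ i j)] [∀ i j, Module F (Λ i j)]
  {A : Type w} [NonUnitalRing A] [Module F A] [SMulCommClass F A A] [IsScalarTower F A A]

/-- The image in `A` of an element `u ∈ V_ij ⊗ Λ(i,j)` under the identification `ψ`
of `A` with `⊕_{i,j ∈ Î} V_ij ⊗ Λ(i,j)`. -/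
noncomputable def emb (ψ : (⨁ p : Option I × Option I,
      Matrix (Fin (nopt n p.1)) (Fin (nopt n p.2)) F ⊗[F] Λ p.1 p.2) ≃ₗ[F] A)
    (p : Option I × Option I)
    (u : Matrix (Fin (nopt n p.1)) (Fin (nopt n p.2)) F ⊗[F] Λ p.1 p.2) : A :=
  ψ (DirectSum.lof F (Option I × Option I)
    (fun q => Matrix (Fin (nopt n q.1)) (Fin (nopt n q.2)) F ⊗[F] Λ q.1 q.2) p u)

/-- The image in `A` of a pure tensor `X ⊗ a ∈ V_ij ⊗ Λ(i,j)`. -/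
noncomputable def elt (ψ : (⨁ p : Option I × Option I,
      Matrix (Fin (nopt n p.1)) (Fin (nopt n p.2)) F ⊗[F] Λ p.1 p.2) ≃ₗ[F] A)
    (i j : Option I) (X : Matrix (Fin (nopt n i)) (Fin (nopt n j)) F) (a : Λ i j) : A :=
  emb F ψ (i, j) (X ⊗ₜ a)

/-- The union of the subspaces `V'_ij ⊗ Λ(i,j)`, `(i,j) ≠ (0,0)`, where `V'_ii` consists
of the trace-zero matrices and `V'_ij = V_ij` for `i ≠ j`. -/
def lieGens (ψ : (⨁ p : Option I × Option I,
      Matrix (Fin (nopt n p.1)) (Fin (nopt n p.2)) F ⊗[F] Λ p.1 p.2) ≃ₗ[F] A) : Set A :=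
  {x | ∃ (i j : Option I) (X : Matrix (Fin (nopt n i)) (Fin (nopt n j)) F) (a : Λ i j),
      i ≠ j ∧ x = elt F ψ i j X a} ∪
  {x | ∃ (i : I) (X : Matrix (Fin (n i)) (Fin (n i)) F) (a : Λ (some i) (some i)),
      Matrix.trace X = 0 ∧ x = elt F ψ (some i) (some i) X a}

/-- `L`: the Lie subalgebra of `A` (as a subspace closed under commutators) generated by
the subspaces `V'_ij ⊗ Λ(i,j)` over all `(i,j) ≠ (0,0)`. -/
def Lsub (ψ : (⨁ p : Option I × Option I,
      Matrix (Fin (nopt n p.1)) (Fin (nopt n p.2)) F ⊗[F] Λ p.1 p.2) ≃ₗ[F] A) :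
    Submodule F A :=
  sInf {J : Submodule F A | lieGens F ψ ⊆ J ∧ ∀ x ∈ J, ∀ y ∈ J, x * y - y * x ∈ J}

variable (mu : ∀ i j k : Option I, Λ i j →ₗ[F] Λ j k →ₗ[F] Λ i k)
  (ψ : (⨁ p : Option I × Option I,
      Matrix (Fin (nopt n p.1)) (Fin (nopt n p.2)) F ⊗[F] Λ p.1 p.2) ≃ₗ[F] A)


/-- The derived subalgebra `A⁽¹⁾`: the span of all commutators of `A`. -/
def derivedSub : Submodule F A :=
  Submodule.span F {z : A | ∃ x y : A, z = x * y - y * x}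

/-! ### Auxiliary matrix lemmas -/

section MatrixAux

open Matrix

variable {K : Type u} [Field K]

lemma aux_exists_ne_ne {N : ℕ} (h : 3 ≤ N) (k l : Fin N) : ∃ m : Fin N, m ≠ k ∧ m ≠ l := by
  by_contra h'
  push_neg at h'
  have hsub : (Finset.univ : Finset (Fin N)) ⊆ {k, l} := by
    intro m _
    simp only [Finset.mem_insert, Finset.mem_singleton]
    rcases eq_or_ne m k with rfl | hm
    · exact Or.inl rfl
    · exact Or.inr (h' m hm)
  have hc := Finset.card_le_card hsub
  have : ({k, l} : Finset (Fin N)).card ≤ 2 :=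
    le_trans (Finset.card_insert_le _ _) (by simp)
  simp [Finset.card_univ] at hc
  omega

/-- The set of commutators of trace-zero matrices. -/
def commTZ (K : Type u) [Field K] (N : ℕ) : Set (Matrix (Fin N) (Fin N) K) :=
  {Z | ∃ P Q : Matrix (Fin N) (Fin N) K,
    Matrix.trace P = 0 ∧ Matrix.trace Q = 0 ∧ Z = P * Q - Q * P}

lemma stdBasis_offdiag_mem (N : ℕ) (h3 : ringChar K = 2 → 3 ≤ N)
    (k l : Fin N) (hkl : k ≠ l) :
    Matrix.single k l (1 : K) ∈ Submodule.span K (commTZ K N) := by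
  by_cases hchar : ringChar K = 2
  · obtain ⟨m, hmk, hml⟩ := aux_exists_ne_ne (h3 hchar) k l
    apply Submodule.subset_span
    refine ⟨Matrix.single k m 1, Matrix.single m l 1,
      trace_single_eq_of_ne _ _ _ (Ne.symm hmk), trace_single_eq_of_ne _ _ _ (Ne.symm hml.symm), ?_⟩
    rw [single_mul_single_same, single_mul_single_of_ne (h := Ne.symm hkl), one_mul, sub_zero]
  · have h2K : (2 : K) ≠ 0 := Ring.two_ne_zero hchar
    have hmem : (Matrix.single k k (1:K) - Matrix.single l l 1) * Matrix.single k l 1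
        - Matrix.single k l 1 * (Matrix.single k k (1:K) - Matrix.single l l 1)
        ∈ Submodule.span K (commTZ K N) := by
      apply Submodule.subset_span
      exact ⟨_, _, by rw [Matrix.trace_sub, trace_single_eq_same, trace_single_eq_same,
        sub_self], trace_single_eq_of_ne _ _ _ (Ne.symm (Ne.symm hkl)), rfl⟩
    have hcalc : (Matrix.single k k (1:K) - Matrix.single l l 1) * Matrix.single k l 1
        - Matrix.single k l 1 * (Matrix.single k k (1:K) - Matrix.single l l 1)
        = (2 : K) • Matrix.single k l 1 := by
      rw [Matrix.sub_mul, Matrix.mul_sub, single_mul_single_same,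
        single_mul_single_of_ne (h := Ne.symm hkl), single_mul_single_of_ne (h := Ne.symm hkl),
        single_mul_single_same, one_mul, two_smul]
      abel
    have := Submodule.smul_mem (Submodule.span K (commTZ K N)) (2 : K)⁻¹ hmem
    rwa [hcalc, smul_smul, inv_mul_cancel₀ h2K, one_smul] at this

lemma stdBasis_diag_mem (N : ℕ) (k l : Fin N) :
    Matrix.single k k (1 : K) - Matrix.single l l 1 ∈ Submodule.span K (commTZ K N) := by
  rcases eq_or_ne k l with rfl | hkl
  · simp
  · apply Submodule.subset_span
    refine ⟨Matrix.single k l 1, Matrix.single l k 1,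
      trace_single_eq_of_ne _ _ _ (Ne.symm (Ne.symm hkl)), trace_single_eq_of_ne _ _ _ (Ne.symm hkl), ?_⟩
    rw [single_mul_single_same, single_mul_single_same, one_mul]

lemma trace_zero_mem_span_commTZ (N : ℕ) (h2 : 2 ≤ N) (h3 : ringChar K = 2 → 3 ≤ N)
    (X : Matrix (Fin N) (Fin N) K) (hX : Matrix.trace X = 0) :
    X ∈ Submodule.span K (commTZ K N) := by
  set S := Submodule.span K (commTZ K N)
  have h0 : 0 < N := by omega
  set z : Fin N := ⟨0, h0⟩ with hz
  let g : Matrix (Fin N) (Fin N) K →ₗ[K] Matrix (Fin N) (Fin N) K :=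
    LinearMap.id - (Matrix.traceLinearMap (Fin N) K K).smulRight (Matrix.single z z 1)
  have hg : ∀ Y : Matrix (Fin N) (Fin N) K,
      g Y = Y - Matrix.trace Y • Matrix.single z z 1 := fun _ => rfl
  have key : ∀ Y : Matrix (Fin N) (Fin N) K, g Y ∈ S := by
    intro Y
    have hY : Y = ∑ k : Fin N, ∑ l : Fin N, Matrix.single k l (Y k l) :=
      matrix_eq_sum_single Y
    rw [hY, map_sum]
    refine Submodule.sum_mem S fun k _ => ?_
    rw [map_sum]
    refine Submodule.sum_mem S fun l _ => ?_
    rw [hg]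
    rcases eq_or_ne k l with rfl | hkl
    · rw [trace_single_eq_same]
      have : Matrix.single k k (Y k k) - Y k k • Matrix.single z z 1
          = Y k k • (Matrix.single k k 1 - Matrix.single z z 1) := by
        simp [smul_sub]
      rw [this]
      exact Submodule.smul_mem S _ (stdBasis_diag_mem N k z)
    · rw [trace_single_eq_of_ne _ _ _ (Ne.symm (Ne.symm hkl)), zero_smul, sub_zero]
      have : Matrix.single k l (Y k l) = Y k l • Matrix.single k l 1 := by
        simp
      rw [this]
      exact Submodule.smul_mem S _ (stdBasis_offdiag_mem N h3 k l hkl)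
  have := key X
  rwa [hg, hX, zero_smul, sub_zero] at this

lemma matrix11_eq_smul_one (M : Matrix (Fin 1) (Fin 1) K) : M = M 0 0 • 1 := by
  ext p q
  fin_cases p
  fin_cases q
  simp [Matrix.one_apply]

lemma matrix11_mul (X Y : Matrix (Fin 1) (Fin 1) K) : X * Y = (X 0 0 * Y 0 0) • 1 := by
  ext p q
  fin_cases p
  fin_cases q
  simp [Matrix.mul_apply, Matrix.one_apply, Fin.sum_univ_one]

lemma stdBasis11_eq_one : (Matrix.single (0 : Fin 1) (0 : Fin 1) (1 : K)) = 1 := by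
  ext p q
  fin_cases p
  fin_cases q
  simp [Matrix.single, Matrix.one_apply]

lemma stdBasis_mul_rect {l m o : Type} [Fintype m] [DecidableEq l] [DecidableEq m]
    [DecidableEq o] (i : l) (j : m) (k : o) (c d : K) :
    Matrix.single i j c * Matrix.single j k d = Matrix.single i k (c * d) := by
  ext a b
  simp only [Matrix.mul_apply, Matrix.single, boole_mul, Matrix.of_apply]
  by_cases h1 : i = a <;> by_cases h2 : k = b <;> simp [h1, h2, ite_and, Finset.sum_ite_eq]

end MatrixAux

/-! ### Auxiliary lemmas in the main setting -/

open Matrix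

/-- `elt` as a linear map in the matrix variable. -/
noncomputable def eltXmap (ψ : (⨁ p : Option I × Option I,
      Matrix (Fin (nopt n p.1)) (Fin (nopt n p.2)) F ⊗[F] Λ p.1 p.2) ≃ₗ[F] A)
    (i j : Option I) (a : Λ i j) :
    Matrix (Fin (nopt n i)) (Fin (nopt n j)) F →ₗ[F] A :=
  ((ψ : _ →ₗ[F] A).comp (DirectSum.lof F (Option I × Option I)
    (fun q => Matrix (Fin (nopt n q.1)) (Fin (nopt n q.2)) F ⊗[F] Λ q.1 q.2) (i, j))).comp
    ((TensorProduct.mk F (Matrix (Fin (nopt n i)) (Fin (nopt n j)) F) (Λ i j)).flip a)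

/-- `elt` as a linear map in the `Λ` variable. -/
noncomputable def eltAmap (ψ : (⨁ p : Option I × Option I,
      Matrix (Fin (nopt n p.1)) (Fin (nopt n p.2)) F ⊗[F] Λ p.1 p.2) ≃ₗ[F] A)
    (i j : Option I) (X : Matrix (Fin (nopt n i)) (Fin (nopt n j)) F) :
    Λ i j →ₗ[F] A :=
  ((ψ : _ →ₗ[F] A).comp (DirectSum.lof F (Option I × Option I)
    (fun q => Matrix (Fin (nopt n q.1)) (Fin (nopt n q.2)) F ⊗[F] Λ q.1 q.2) (i, j))).comp
    (TensorProduct.mk F (Matrix (Fin (nopt n i)) (Fin (nopt n j)) F) (Λ i j) X)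

section EltAux

variable (ψ : (⨁ p : Option I × Option I,
      Matrix (Fin (nopt n p.1)) (Fin (nopt n p.2)) F ⊗[F] Λ p.1 p.2) ≃ₗ[F] A)

@[simp] lemma eltXmap_apply (i j : Option I) (a : Λ i j)
    (X : Matrix (Fin (nopt n i)) (Fin (nopt n j)) F) :
    eltXmap F ψ i j a X = elt F ψ i j X a := rfl

@[simp] lemma eltAmap_apply (i j : Option I) (X : Matrix (Fin (nopt n i)) (Fin (nopt n j)) F)
    (a : Λ i j) : eltAmap F ψ i j X a = elt F ψ i j X a := rfl

lemma elt_sub_left (i j : Option I) (X Y : Matrix (Fin (nopt n i)) (Fin (nopt n j)) F)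
    (a : Λ i j) : elt F ψ i j (X - Y) a = elt F ψ i j X a - elt F ψ i j Y a :=
  map_sub (eltXmap F ψ i j a) X Y

lemma elt_add_left (i j : Option I) (X Y : Matrix (Fin (nopt n i)) (Fin (nopt n j)) F)
    (a : Λ i j) : elt F ψ i j (X + Y) a = elt F ψ i j X a + elt F ψ i j Y a :=
  map_add (eltXmap F ψ i j a) X Y

lemma elt_smul_left (i j : Option I) (c : F) (X : Matrix (Fin (nopt n i)) (Fin (nopt n j)) F)
    (a : Λ i j) : elt F ψ i j (c • X) a = c • elt F ψ i j X a :=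
  map_smul (eltXmap F ψ i j a) c X

lemma elt_sub_right (i j : Option I) (X : Matrix (Fin (nopt n i)) (Fin (nopt n j)) F)
    (a b : Λ i j) : elt F ψ i j X (a - b) = elt F ψ i j X a - elt F ψ i j X b :=
  map_sub (eltAmap F ψ i j X) a b

lemma mem_of_elt_mem (S : Submodule F A)
    (h : ∀ (i j : Option I) (X : Matrix (Fin (nopt n i)) (Fin (nopt n j)) F) (a : Λ i j),
      elt F ψ i j X a ∈ S) (z : A) : z ∈ S := by
  have key : ∀ w, ψ w ∈ S := by
    intro w
    induction w using DirectSum.induction_on with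
    | zero => rw [map_zero]; exact S.zero_mem
    | of p u =>
      obtain ⟨i, j⟩ := p
      induction u using TensorProduct.induction_on with
      | zero => rw [map_zero, map_zero]; exact S.zero_mem
      | tmul X a => exact h i j X a
      | add u v hu hv => rw [map_add, map_add]; exact S.add_mem hu hv
    | add u v hu hv => rw [map_add]; exact S.add_mem hu hv
  have hz := key (ψ.symm z)
  rwa [LinearEquiv.apply_symm_apply] at hz

/-! ### Basic facts about `Lsub` and `derivedSub` -/

lemma lieGens_subset_Lsub : lieGens F ψ ⊆ (Lsub F ψ : Set A) := fun x hx =>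
  Submodule.mem_sInf.2 fun _ hJ => hJ.1 hx

lemma Lsub_bracket {x y : A} (hx : x ∈ Lsub F ψ) (hy : y ∈ Lsub F ψ) :
    x * y - y * x ∈ Lsub F ψ :=
  Submodule.mem_sInf.2 fun J hJ =>
    hJ.2 x (Submodule.mem_sInf.1 hx J hJ) y (Submodule.mem_sInf.1 hy J hJ)

lemma offdiag_mem_Lsub (i j : Option I) (hij : i ≠ j)
    (X : Matrix (Fin (nopt n i)) (Fin (nopt n j)) F) (a : Λ i j) :
    elt F ψ i j X a ∈ Lsub F ψ :=
  lieGens_subset_Lsub F ψ (Or.inl ⟨i, j, X, a, hij, rfl⟩)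

lemma tz_mem_Lsub (i : I) (X : Matrix (Fin (nopt n (some i))) (Fin (nopt n (some i))) F)
    (hX : Matrix.trace X = 0) (a : Λ (some i) (some i)) :
    elt F ψ (some i) (some i) X a ∈ Lsub F ψ :=
  lieGens_subset_Lsub F ψ (Or.inr ⟨i, X, a, hX, rfl⟩)

lemma comm_mem_derived (x y : A) : x * y - y * x ∈ derivedSub F (A := A) :=
  Submodule.subset_span ⟨x, y, rfl⟩

end EltAux

section MainAux

variable {mu} {ψ}

variable (mu) (ψ)

lemma offdiag_mem_derived
    (one : ∀ i : I, Λ (some i) (some i))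
    (hone_left : ∀ (i : I) (j : Option I) (a : Λ (some i) j),
      mu (some i) (some i) j (one i) a = a)
    (hone_right : ∀ (i : I) (j : Option I) (a : Λ j (some i)),
      mu j (some i) (some i) a (one i) = a)
    (hmul : ∀ (i j k : Option I) (X : Matrix (Fin (nopt n i)) (Fin (nopt n j)) F)
      (a : Λ i j) (Y : Matrix (Fin (nopt n j)) (Fin (nopt n k)) F) (b : Λ j k),
      elt F ψ i j X a * elt F ψ j k Y b = elt F ψ i k (X * Y) (mu i j k a b))
    (hmul0 : ∀ (i j s t : Option I), j ≠ s →
      ∀ (X : Matrix (Fin (nopt n i)) (Fin (nopt n j)) F) (a : Λ i j)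
        (Y : Matrix (Fin (nopt n s)) (Fin (nopt n t)) F) (b : Λ s t),
      elt F ψ i j X a * elt F ψ s t Y b = 0)
    (i j : Option I) (hij : i ≠ j)
    (X : Matrix (Fin (nopt n i)) (Fin (nopt n j)) F) (a : Λ i j) :
    elt F ψ i j X a ∈ derivedSub F (A := A) := by
  cases j with
  | some j0 =>
    have h1 : elt F ψ i (some j0) X a * elt F ψ (some j0) (some j0) 1 (one j0)
        = elt F ψ i (some j0) X a := by
      rw [hmul, Matrix.mul_one, hone_right]
    have h2 : elt F ψ (some j0) (some j0) 1 (one j0) * elt F ψ i (some j0) X a = 0 :=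
      hmul0 _ _ _ _ (Ne.symm hij) _ _ _ _
    have hc := comm_mem_derived F (A := A) (elt F ψ i (some j0) X a)
      (elt F ψ (some j0) (some j0) 1 (one j0))
    rwa [h1, h2, sub_zero] at hc
  | none =>
    cases i with
    | none => exact absurd rfl hij
    | some i0 =>
      have h1 : elt F ψ (some i0) (some i0) 1 (one i0) * elt F ψ (some i0) none X a
          = elt F ψ (some i0) none X a := by
        rw [hmul, Matrix.one_mul, hone_left]
      have h2 : elt F ψ (some i0) none X a * elt F ψ (some i0) (some i0) 1 (one i0) = 0 :=
        hmul0 _ _ _ _ (by simp) _ _ _ _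
      have hc := comm_mem_derived F (A := A) (elt F ψ (some i0) (some i0) 1 (one i0))
        (elt F ψ (some i0) none X a)
      rwa [h1, h2, sub_zero] at hc

lemma elt_comm_factor
    (one : ∀ i : I, Λ (some i) (some i))
    (hone_left : ∀ (i : I) (j : Option I) (a : Λ (some i) j),
      mu (some i) (some i) j (one i) a = a)
    (hone_right : ∀ (i : I) (j : Option I) (a : Λ j (some i)),
      mu j (some i) (some i) a (one i) = a)
    (hmul : ∀ (i j k : Option I) (X : Matrix (Fin (nopt n i)) (Fin (nopt n j)) F)
      (a : Λ i j) (Y : Matrix (Fin (nopt n j)) (Fin (nopt n k)) F) (b : Λ j k),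
      elt F ψ i j X a * elt F ψ j k Y b = elt F ψ i k (X * Y) (mu i j k a b))
    (i : I) (P Q : Matrix (Fin (nopt n (some i))) (Fin (nopt n (some i))) F)
    (a : Λ (some i) (some i)) :
    elt F ψ (some i) (some i) (P * Q - Q * P) a
      = elt F ψ (some i) (some i) P a * elt F ψ (some i) (some i) Q (one i)
        - elt F ψ (some i) (some i) Q (one i) * elt F ψ (some i) (some i) P a := by
  rw [hmul, hmul, hone_right, hone_left, elt_sub_left]

lemma diag_tz_mem_derived
    (hn2 : ∀ i : I, 2 ≤ n i) (hn3 : ringChar F = 2 → ∀ i : I, 3 ≤ n i)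
    (one : ∀ i : I, Λ (some i) (some i))
    (hone_left : ∀ (i : I) (j : Option I) (a : Λ (some i) j),
      mu (some i) (some i) j (one i) a = a)
    (hone_right : ∀ (i : I) (j : Option I) (a : Λ j (some i)),
      mu j (some i) (some i) a (one i) = a)
    (hmul : ∀ (i j k : Option I) (X : Matrix (Fin (nopt n i)) (Fin (nopt n j)) F)
      (a : Λ i j) (Y : Matrix (Fin (nopt n j)) (Fin (nopt n k)) F) (b : Λ j k),
      elt F ψ i j X a * elt F ψ j k Y b = elt F ψ i k (X * Y) (mu i j k a b))
    (i : I) (X : Matrix (Fin (nopt n (some i))) (Fin (nopt n (some i))) F)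
    (hX : Matrix.trace X = 0) (a : Λ (some i) (some i)) :
    elt F ψ (some i) (some i) X a ∈ derivedSub F (A := A) := by
  have hsub : commTZ F (nopt n (some i)) ⊆
      ((derivedSub F (A := A)).comap (eltXmap F ψ (some i) (some i) a) : Set _) := by
    rintro Z ⟨P, Q, hP, hQ, rfl⟩
    show elt F ψ (some i) (some i) (P * Q - Q * P) a ∈ derivedSub F (A := A)
    rw [elt_comm_factor F mu ψ one hone_left hone_right hmul]
    exact comm_mem_derived F _ _
  have hspan := Submodule.span_le.2 hsub
  have hm := hspan (trace_zero_mem_span_commTZ (nopt n (some i)) (hn2 i)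
    (fun h => hn3 h i) X hX)
  exact hm

lemma Lsub_le_derived
    (hn2 : ∀ i : I, 2 ≤ n i) (hn3 : ringChar F = 2 → ∀ i : I, 3 ≤ n i)
    (one : ∀ i : I, Λ (some i) (some i))
    (hone_left : ∀ (i : I) (j : Option I) (a : Λ (some i) j),
      mu (some i) (some i) j (one i) a = a)
    (hone_right : ∀ (i : I) (j : Option I) (a : Λ j (some i)),
      mu j (some i) (some i) a (one i) = a)
    (hmul : ∀ (i j k : Option I) (X : Matrix (Fin (nopt n i)) (Fin (nopt n j)) F)
      (a : Λ i j) (Y : Matrix (Fin (nopt n j)) (Fin (nopt n k)) F) (b : Λ j k),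
      elt F ψ i j X a * elt F ψ j k Y b = elt F ψ i k (X * Y) (mu i j k a b))
    (hmul0 : ∀ (i j s t : Option I), j ≠ s →
      ∀ (X : Matrix (Fin (nopt n i)) (Fin (nopt n j)) F) (a : Λ i j)
        (Y : Matrix (Fin (nopt n s)) (Fin (nopt n t)) F) (b : Λ s t),
      elt F ψ i j X a * elt F ψ s t Y b = 0) :
    Lsub F ψ ≤ derivedSub F (A := A) := by
  apply sInf_le
  constructor
  · rintro x (⟨i, j, X, a, hij, rfl⟩ | ⟨i, X, a, hX, rfl⟩)
    · exact offdiag_mem_derived F mu ψ one hone_left hone_right hmul hmul0 i j hij X a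
    · exact diag_tz_mem_derived F mu ψ hn2 hn3 one hone_left hone_right hmul i X hX a
  · exact fun x _ y _ => comm_mem_derived F x y

lemma diag_comm_mem_Lsub
    (hn2 : ∀ i : I, 2 ≤ n i)
    (hmul : ∀ (i j k : Option I) (X : Matrix (Fin (nopt n i)) (Fin (nopt n j)) F)
      (a : Λ i j) (Y : Matrix (Fin (nopt n j)) (Fin (nopt n k)) F) (b : Λ j k),
      elt F ψ i j X a * elt F ψ j k Y b = elt F ψ i k (X * Y) (mu i j k a b))
    (i : I) (Z : Matrix (Fin (nopt n (some i))) (Fin (nopt n (some i))) F)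
    (a b : Λ (some i) (some i)) :
    elt F ψ (some i) (some i) Z
      (mu (some i) (some i) (some i) a b - mu (some i) (some i) (some i) b a)
      ∈ Lsub F ψ := by
  have h0 : 0 < nopt n (some i) := lt_of_lt_of_le two_pos (hn2 i)
  have h1 : 1 < nopt n (some i) := hn2 i
  set z0 : Fin (nopt n (some i)) := ⟨0, h0⟩ with hz0
  set z1 : Fin (nopt n (some i)) := ⟨1, h1⟩ with hz1
  have hz : z0 ≠ z1 := by simp [hz0, hz1, Fin.ext_iff]
  have hE01 : elt F ψ (some i) (some i) (Matrix.single z0 z1 1) a ∈ Lsub F ψ :=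
    tz_mem_Lsub F ψ i _ (trace_single_eq_of_ne _ _ _ (Ne.symm (Ne.symm hz))) a
  have hE10 : elt F ψ (some i) (some i) (Matrix.single z1 z0 1) b ∈ Lsub F ψ :=
    tz_mem_Lsub F ψ i _ (trace_single_eq_of_ne _ _ _ (Ne.symm hz)) b
  have hbr := Lsub_bracket F ψ hE01 hE10
  rw [hmul, hmul, single_mul_single_same, single_mul_single_same, one_mul] at hbr
  have htz : elt F ψ (some i) (some i) (Matrix.single z1 z1 1 - Matrix.single z0 z0 1)
      (mu (some i) (some i) (some i) b a) ∈ Lsub F ψ :=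
    tz_mem_Lsub F ψ i _ (by
      rw [Matrix.trace_sub, trace_single_eq_same, trace_single_eq_same, sub_self]) _
  have hE00 : elt F ψ (some i) (some i) (Matrix.single z0 z0 1)
      (mu (some i) (some i) (some i) a b - mu (some i) (some i) (some i) b a)
      ∈ Lsub F ψ := by
    have hadd := Submodule.add_mem _ hbr htz
    have heq : elt F ψ (some i) (some i) (Matrix.single z0 z0 1)
          (mu (some i) (some i) (some i) a b)
        - elt F ψ (some i) (some i) (Matrix.single z1 z1 1)
          (mu (some i) (some i) (some i) b a)
        + elt F ψ (some i) (some i) (Matrix.single z1 z1 1 - Matrix.single z0 z0 1)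
          (mu (some i) (some i) (some i) b a)
        = elt F ψ (some i) (some i) (Matrix.single z0 z0 1)
          (mu (some i) (some i) (some i) a b - mu (some i) (some i) (some i) b a) := by
      rw [elt_sub_left, elt_sub_right]
      abel
    rwa [heq] at hadd
  have hZdec : Z = (Z - Matrix.trace Z • Matrix.single z0 z0 1)
      + Matrix.trace Z • Matrix.single z0 z0 1 := by abel
  rw [hZdec, elt_add_left, elt_smul_left]
  refine Submodule.add_mem _ (tz_mem_Lsub F ψ i _ ?_ _) (Submodule.smul_mem _ _ hE00)
  rw [Matrix.trace_sub, Matrix.trace_smul, trace_single_eq_same, smul_eq_mul, mul_one,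
    sub_self]

lemma zero_comm_mem_Lsub
    (hn2 : ∀ i : I, 2 ≤ n i)
    (hassoc : ∀ (i j k l : Option I) (a : Λ i j) (b : Λ j k) (c : Λ k l),
      mu i k l (mu i j k a b) c = mu i j l a (mu j k l b c))
    (h00 : ∀ x : Λ none none, x ∈ Submodule.span F
      {y : Λ none none | ∃ (i : I) (a : Λ none (some i)) (b : Λ (some i) none),
        y = mu none (some i) none a b})
    (hmul : ∀ (i j k : Option I) (X : Matrix (Fin (nopt n i)) (Fin (nopt n j)) F)
      (a : Λ i j) (Y : Matrix (Fin (nopt n j)) (Fin (nopt n k)) F) (b : Λ j k),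
      elt F ψ i j X a * elt F ψ j k Y b = elt F ψ i k (X * Y) (mu i j k a b))
    (a b : Λ none none) :
    elt F ψ none none 1 (mu none none none a b - mu none none none b a) ∈ Lsub F ψ := by
  let m : Λ none none →ₗ[F] Λ none none :=
    (mu none none none).flip b - mu none none none b
  let φ : Λ none none →ₗ[F] A := (eltAmap F ψ none none 1).comp m
  have hφ : ∀ c : Λ none none, φ c
      = elt F ψ none none 1 (mu none none none c b - mu none none none b c) := fun _ => rfl
  suffices h : φ a ∈ Lsub F ψ by rwa [hφ] at h
  have hsub : {y : Λ none none | ∃ (i : I) (c : Λ none (some i)) (d : Λ (some i) none),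
      y = mu none (some i) none c d} ⊆ (((Lsub F ψ).comap φ : Submodule F (Λ none none)) :
        Set (Λ none none)) := by
    rintro y ⟨i, c, d, rfl⟩
    show elt F ψ none none 1
      (mu none none none (mu none (some i) none c d) b
        - mu none none none b (mu none (some i) none c d)) ∈ Lsub F ψ
    have h0i : 0 < nopt n (some i) := lt_of_lt_of_le two_pos (hn2 i)
    set w : Fin (nopt n (some i)) := ⟨0, h0i⟩ with hw
    set u : Matrix (Fin (nopt n none)) (Fin (nopt n (some i))) F :=
      Matrix.single (0 : Fin 1) w 1 with hu
    set v : Matrix (Fin (nopt n (some i))) (Fin (nopt n none)) F :=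
      Matrix.single w (0 : Fin 1) 1 with hv
    have huv : u * v = 1 := by
      rw [hu, hv, stdBasis_mul_rect, one_mul]
      exact stdBasis11_eq_one
    have hne : (some i : Option I) ≠ none := by simp
    have hne' : (none : Option I) ≠ some i := by simp
    have br1 := Lsub_bracket F ψ (offdiag_mem_Lsub F ψ none (some i) hne' u c)
      (offdiag_mem_Lsub F ψ (some i) none hne v (mu (some i) none none d b))
    rw [hmul, hmul, huv] at br1
    have br2 := Lsub_bracket F ψ
      (offdiag_mem_Lsub F ψ none (some i) hne' u (mu none none (some i) b c))
      (offdiag_mem_Lsub F ψ (some i) none hne v d)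
    rw [hmul, hmul, huv] at br2
    have hmem := Submodule.sub_mem _ br1 br2
    have heq : elt F ψ none none 1
          (mu none (some i) none c (mu (some i) none none d b))
        - elt F ψ (some i) (some i) (v * u)
          (mu (some i) none (some i) (mu (some i) none none d b) c)
        - (elt F ψ none none 1
          (mu none (some i) none (mu none none (some i) b c) d)
        - elt F ψ (some i) (some i) (v * u)
          (mu (some i) none (some i) d (mu none none (some i) b c)))
        = elt F ψ none none 1
          (mu none none none (mu none (some i) none c d) b
            - mu none none none b (mu none (some i) none c d)) := by
      rw [hassoc none (some i) none none c d b]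
      rw [← hassoc none none (some i) none b c d]
      rw [hassoc (some i) none none (some i) d b c]
      rw [elt_sub_right]
      abel
    rwa [heq] at hmem
  exact Submodule.mem_comap.1 (Submodule.span_le.2 hsub (h00 a))

lemma elt_bracket_mem_Lsub
    (hn2 : ∀ i : I, 2 ≤ n i)
    (hassoc : ∀ (i j k l : Option I) (a : Λ i j) (b : Λ j k) (c : Λ k l),
      mu i k l (mu i j k a b) c = mu i j l a (mu j k l b c))
    (h00 : ∀ x : Λ none none, x ∈ Submodule.span F
      {y : Λ none none | ∃ (i : I) (a : Λ none (some i)) (b : Λ (some i) none),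
        y = mu none (some i) none a b})
    (hmul : ∀ (i j k : Option I) (X : Matrix (Fin (nopt n i)) (Fin (nopt n j)) F)
      (a : Λ i j) (Y : Matrix (Fin (nopt n j)) (Fin (nopt n k)) F) (b : Λ j k),
      elt F ψ i j X a * elt F ψ j k Y b = elt F ψ i k (X * Y) (mu i j k a b))
    (hmul0 : ∀ (i j s t : Option I), j ≠ s →
      ∀ (X : Matrix (Fin (nopt n i)) (Fin (nopt n j)) F) (a : Λ i j)
        (Y : Matrix (Fin (nopt n s)) (Fin (nopt n t)) F) (b : Λ s t),
      elt F ψ i j X a * elt F ψ s t Y b = 0)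
    (i j s t : Option I) (X : Matrix (Fin (nopt n i)) (Fin (nopt n j)) F) (a : Λ i j)
    (Y : Matrix (Fin (nopt n s)) (Fin (nopt n t)) F) (b : Λ s t) :
    elt F ψ i j X a * elt F ψ s t Y b - elt F ψ s t Y b * elt F ψ i j X a ∈ Lsub F ψ := by
  by_cases hjs : j = s
  · subst hjs
    by_cases hti : t = i
    · subst hti
      by_cases hij : t = j
      · subst hij
        cases t with
        | none =>
          rw [hmul, hmul]
          rw [matrix11_mul X Y, matrix11_mul Y X, mul_comm (Y 0 0) (X 0 0),
            elt_smul_left, elt_smul_left, ← smul_sub, ← elt_sub_right]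
          exact Submodule.smul_mem _ _ (zero_comm_mem_Lsub F mu ψ hn2 hassoc h00 hmul a b)
        | some i0 =>
          rw [hmul, hmul]
          have heq : elt F ψ (some i0) (some i0) (X * Y)
                (mu (some i0) (some i0) (some i0) a b)
              - elt F ψ (some i0) (some i0) (Y * X)
                (mu (some i0) (some i0) (some i0) b a)
              = elt F ψ (some i0) (some i0) (X * Y - Y * X)
                (mu (some i0) (some i0) (some i0) a b)
              + elt F ψ (some i0) (some i0) (Y * X)
                (mu (some i0) (some i0) (some i0) a b
                  - mu (some i0) (some i0) (some i0) b a) := by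
            rw [elt_sub_left, elt_sub_right]
            abel
          rw [heq]
          refine Submodule.add_mem _ (tz_mem_Lsub F ψ i0 _ ?_ _)
            (diag_comm_mem_Lsub F mu ψ hn2 hmul i0 (Y * X) a b)
          rw [Matrix.trace_sub, Matrix.trace_mul_comm, sub_self]
      · exact Lsub_bracket F ψ (offdiag_mem_Lsub F ψ t j hij X a)
          (offdiag_mem_Lsub F ψ j t (Ne.symm hij) Y b)
    · rw [hmul, hmul0 _ _ _ _ hti, sub_zero]
      exact offdiag_mem_Lsub F ψ i t (fun h => hti h.symm) _ _
  · rw [hmul0 _ _ _ _ hjs]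
    by_cases hti : t = i
    · subst hti
      rw [hmul, zero_sub]
      exact Submodule.neg_mem _ (offdiag_mem_Lsub F ψ s j (Ne.symm hjs) _ _)
    · rw [hmul0 _ _ _ _ hti, sub_zero]
      exact Submodule.zero_mem _

lemma derived_le_Lsub
    (hn2 : ∀ i : I, 2 ≤ n i)
    (hassoc : ∀ (i j k l : Option I) (a : Λ i j) (b : Λ j k) (c : Λ k l),
      mu i k l (mu i j k a b) c = mu i j l a (mu j k l b c))
    (h00 : ∀ x : Λ none none, x ∈ Submodule.span F
      {y : Λ none none | ∃ (i : I) (a : Λ none (some i)) (b : Λ (some i) none),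
        y = mu none (some i) none a b})
    (hmul : ∀ (i j k : Option I) (X : Matrix (Fin (nopt n i)) (Fin (nopt n j)) F)
      (a : Λ i j) (Y : Matrix (Fin (nopt n j)) (Fin (nopt n k)) F) (b : Λ j k),
      elt F ψ i j X a * elt F ψ j k Y b = elt F ψ i k (X * Y) (mu i j k a b))
    (hmul0 : ∀ (i j s t : Option I), j ≠ s →
      ∀ (X : Matrix (Fin (nopt n i)) (Fin (nopt n j)) F) (a : Λ i j)
        (Y : Matrix (Fin (nopt n s)) (Fin (nopt n t)) F) (b : Λ s t),
      elt F ψ i j X a * elt F ψ s t Y b = 0) :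
    derivedSub F (A := A) ≤ Lsub F ψ := by
  apply Submodule.span_le.2
  rintro z ⟨x, y, rfl⟩
  have hx := mem_of_elt_mem F ψ
    ((Lsub F ψ).comap (LinearMap.mulRight F y - LinearMap.mulLeft F y))
    (fun i j X a => ?_) x
  · exact hx
  · simp only [Submodule.mem_comap, LinearMap.sub_apply, LinearMap.mulRight_apply,
      LinearMap.mulLeft_apply]
    have hy := mem_of_elt_mem F ψ
      ((Lsub F ψ).comap (LinearMap.mulLeft F (elt F ψ i j X a)
        - LinearMap.mulRight F (elt F ψ i j X a)))
      (fun s t Y b => ?_) y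
    · simpa only [Submodule.mem_comap, LinearMap.sub_apply, LinearMap.mulRight_apply,
        LinearMap.mulLeft_apply] using hy
    · simp only [Submodule.mem_comap, LinearMap.sub_apply, LinearMap.mulRight_apply,
        LinearMap.mulLeft_apply]
      exact elt_bracket_mem_Lsub F mu ψ hn2 hassoc h00 hmul hmul0 i j s t X a Y b

end MainAux


section FinalAux

lemma derived_perfect
    (hn2 : ∀ i : I, 2 ≤ n i) (hn3 : ringChar F = 2 → ∀ i : I, 3 ≤ n i)
    (one : ∀ i : I, Λ (some i) (some i))
    (hone_left : ∀ (i : I) (j : Option I) (a : Λ (some i) j),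
      mu (some i) (some i) j (one i) a = a)
    (hone_right : ∀ (i : I) (j : Option I) (a : Λ j (some i)),
      mu j (some i) (some i) a (one i) = a)
    (hassoc : ∀ (i j k l : Option I) (a : Λ i j) (b : Λ j k) (c : Λ k l),
      mu i k l (mu i j k a b) c = mu i j l a (mu j k l b c))
    (h00 : ∀ x : Λ none none, x ∈ Submodule.span F
      {y : Λ none none | ∃ (i : I) (a : Λ none (some i)) (b : Λ (some i) none),
        y = mu none (some i) none a b})
    (hmul : ∀ (i j k : Option I) (X : Matrix (Fin (nopt n i)) (Fin (nopt n j)) F)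
      (a : Λ i j) (Y : Matrix (Fin (nopt n j)) (Fin (nopt n k)) F) (b : Λ j k),
      elt F ψ i j X a * elt F ψ j k Y b = elt F ψ i k (X * Y) (mu i j k a b))
    (hmul0 : ∀ (i j s t : Option I), j ≠ s →
      ∀ (X : Matrix (Fin (nopt n i)) (Fin (nopt n j)) F) (a : Λ i j)
        (Y : Matrix (Fin (nopt n s)) (Fin (nopt n t)) F) (b : Λ s t),
      elt F ψ i j X a * elt F ψ s t Y b = 0)
 :
    Submodule.span F {z : A | ∃ x ∈ derivedSub F (A := A), ∃ y ∈ derivedSub F (A := A),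
        z = x * y - y * x} = derivedSub F (A := A) := by
  set D2 := Submodule.span F {z : A | ∃ x ∈ derivedSub F (A := A),
    ∃ y ∈ derivedSub F (A := A), z = x * y - y * x} with hD2
  have hD2le : D2 ≤ derivedSub F (A := A) := by
    rw [hD2]
    apply Submodule.span_le.2
    rintro z ⟨x, -, y, -, rfl⟩
    exact comm_mem_derived F x y
  refine le_antisymm hD2le ?_
  have hLle : Lsub F ψ ≤ D2 := by
    apply sInf_le
    refine ⟨?_, fun x hx y hy => Submodule.subset_span ⟨x, hD2le hx, y, hD2le hy, rfl⟩⟩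
    rintro x (⟨i, j, X, a, hij, rfl⟩ | ⟨i, X, a, hX, rfl⟩)
    · -- off-diagonal generators
      have hall : ∀ (k : Fin (nopt n i)) (l : Fin (nopt n j)) (c : F),
          elt F ψ i j (Matrix.single k l c) a ∈ D2 := by
        intro k l c
        cases j with
        | some j0 =>
          haveI : Nontrivial (Fin (nopt n (some j0))) :=
            Fin.nontrivial_iff_two_le.2 (hn2 j0)
          obtain ⟨m, hml⟩ := exists_ne l
          have hx : elt F ψ i (some j0) (Matrix.single k m c) a ∈ derivedSub F (A := A) :=
            offdiag_mem_derived F mu ψ one hone_left hone_right hmul hmul0 i (some j0) hij _ _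
          have hy : elt F ψ (some j0) (some j0) (Matrix.single m l 1) (one j0)
              ∈ derivedSub F (A := A) :=
            diag_tz_mem_derived F mu ψ hn2 hn3 one hone_left hone_right hmul j0 _
              (trace_single_eq_of_ne _ _ _ (Ne.symm (Ne.symm hml))) _
          refine Submodule.subset_span ⟨_, hx, _, hy, ?_⟩
          rw [hmul, stdBasis_mul_rect, mul_one, hone_right,
            hmul0 _ _ _ _ (Ne.symm hij), sub_zero]
        | none =>
          cases i with
          | none => exact absurd rfl hij
          | some i0 =>
            haveI : Nontrivial (Fin (nopt n (some i0))) :=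
              Fin.nontrivial_iff_two_le.2 (hn2 i0)
            obtain ⟨m, hmk⟩ := exists_ne k
            have hx : elt F ψ (some i0) (some i0) (Matrix.single k m 1) (one i0)
                ∈ derivedSub F (A := A) :=
              diag_tz_mem_derived F mu ψ hn2 hn3 one hone_left hone_right hmul i0 _
                (trace_single_eq_of_ne _ _ _ (Ne.symm hmk)) _
            have hy : elt F ψ (some i0) none (Matrix.single m l c) a
                ∈ derivedSub F (A := A) :=
              offdiag_mem_derived F mu ψ one hone_left hone_right hmul hmul0 (some i0) none
                hij _ _
            refine Submodule.subset_span ⟨_, hx, _, hy, ?_⟩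
            rw [hmul, stdBasis_mul_rect, one_mul, hone_left,
              hmul0 _ _ _ _ (by simp), sub_zero]
      have hX' : X ∈ D2.comap (eltXmap F ψ i j a) := by
        rw [matrix_eq_sum_single X]
        refine Submodule.sum_mem _ fun k _ => Submodule.sum_mem _ fun l _ => ?_
        have := hall k l (X k l)
        simpa only [Submodule.mem_comap, eltXmap_apply] using this
      exact hX'
    · -- diagonal trace-zero generators
      have hsub : commTZ F (nopt n (some i)) ⊆
          ((D2.comap (eltXmap F ψ (some i) (some i) a)) : Set _) := by
        rintro Z ⟨P, Q, hP, hQ, rfl⟩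
        show elt F ψ (some i) (some i) (P * Q - Q * P) a ∈ D2
        rw [elt_comm_factor F mu ψ one hone_left hone_right hmul]
        exact Submodule.subset_span
          ⟨_, diag_tz_mem_derived F mu ψ hn2 hn3 one hone_left hone_right hmul i P hP a,
           _, diag_tz_mem_derived F mu ψ hn2 hn3 one hone_left hone_right hmul i Q hQ (one i),
           rfl⟩
      have hm := Submodule.span_le.2 hsub (trace_zero_mem_span_commTZ (nopt n (some i))
        (hn2 i) (fun h => hn3 h i) X hX)
      exact hm
  exact le_trans (derived_le_Lsub F mu ψ hn2 hassoc h00 hmul hmul0) hLle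

lemma prod_sup_derived_eq_top
    (hn2 : ∀ i : I, 2 ≤ n i) (hn3 : ringChar F = 2 → ∀ i : I, 3 ≤ n i)
    (one : ∀ i : I, Λ (some i) (some i))
    (hone_left : ∀ (i : I) (j : Option I) (a : Λ (some i) j),
      mu (some i) (some i) j (one i) a = a)
    (hone_right : ∀ (i : I) (j : Option I) (a : Λ j (some i)),
      mu j (some i) (some i) a (one i) = a)
    (hassoc : ∀ (i j k l : Option I) (a : Λ i j) (b : Λ j k) (c : Λ k l),
      mu i k l (mu i j k a b) c = mu i j l a (mu j k l b c))
    (h00 : ∀ x : Λ none none, x ∈ Submodule.span F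
      {y : Λ none none | ∃ (i : I) (a : Λ none (some i)) (b : Λ (some i) none),
        y = mu none (some i) none a b})
    (hmul : ∀ (i j k : Option I) (X : Matrix (Fin (nopt n i)) (Fin (nopt n j)) F)
      (a : Λ i j) (Y : Matrix (Fin (nopt n j)) (Fin (nopt n k)) F) (b : Λ j k),
      elt F ψ i j X a * elt F ψ j k Y b = elt F ψ i k (X * Y) (mu i j k a b))
    (hmul0 : ∀ (i j s t : Option I), j ≠ s →
      ∀ (X : Matrix (Fin (nopt n i)) (Fin (nopt n j)) F) (a : Λ i j)
        (Y : Matrix (Fin (nopt n s)) (Fin (nopt n t)) F) (b : Λ s t),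
      elt F ψ i j X a * elt F ψ s t Y b = 0)
 :
    Submodule.span F {z : A | ∃ x ∈ derivedSub F (A := A), ∃ y ∈ derivedSub F (A := A),
        z = x * y} ⊔ derivedSub F (A := A) = (⊤ : Submodule F A) := by
  set M := Submodule.span F {z : A | ∃ x ∈ derivedSub F (A := A),
    ∃ y ∈ derivedSub F (A := A), z = x * y} ⊔ derivedSub F (A := A) with hM
  rw [eq_top_iff]
  intro z _
  refine mem_of_elt_mem F ψ M (fun i j X a => ?_) z
  by_cases hij : i = j
  · subst hij
    cases i with
    | none =>
      rw [show X = X 0 0 • 1 from matrix11_eq_smul_one X, elt_smul_left]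
      apply Submodule.smul_mem
      have hsub : {y : Λ none none | ∃ (i : I) (c : Λ none (some i)) (d : Λ (some i) none),
          y = mu none (some i) none c d} ⊆ ((M.comap (eltAmap F ψ none none 1)) : Set _) := by
        rintro y ⟨i, c, d, rfl⟩
        show elt F ψ none none 1 (mu none (some i) none c d) ∈ M
        have h0i : 0 < nopt n (some i) := lt_of_lt_of_le two_pos (hn2 i)
        set w : Fin (nopt n (some i)) := ⟨0, h0i⟩ with hw
        set u : Matrix (Fin (nopt n none)) (Fin (nopt n (some i))) F :=
          Matrix.single (0 : Fin 1) w 1 with hu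
        set v : Matrix (Fin (nopt n (some i))) (Fin (nopt n none)) F :=
          Matrix.single w (0 : Fin 1) 1 with hv
        have huv : u * v = 1 := by
          rw [hu, hv, stdBasis_mul_rect, one_mul]
          exact stdBasis11_eq_one
        apply Submodule.mem_sup_left
        refine Submodule.subset_span
          ⟨_, offdiag_mem_derived F mu ψ one hone_left hone_right hmul hmul0 none (some i)
            (by simp) u c,
           _, offdiag_mem_derived F mu ψ one hone_left hone_right hmul hmul0 (some i) none
            (by simp) v d, ?_⟩
        rw [hmul, huv]
      have := Submodule.span_le.2 hsub (h00 a)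
      simpa only [Submodule.mem_comap, eltAmap_apply] using this
    | some i0 =>
      have h0 : 0 < nopt n (some i0) := lt_of_lt_of_le two_pos (hn2 i0)
      have h1 : 1 < nopt n (some i0) := hn2 i0
      set z0 : Fin (nopt n (some i0)) := ⟨0, h0⟩ with hz0
      set z1 : Fin (nopt n (some i0)) := ⟨1, h1⟩ with hz1
      have hz : z0 ≠ z1 := by simp [hz0, hz1, Fin.ext_iff]
      have hdec : X = (X - Matrix.trace X • Matrix.single z0 z0 1)
          + Matrix.trace X • Matrix.single z0 z0 1 := by abel
      rw [hdec, elt_add_left, elt_smul_left]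
      refine Submodule.add_mem _ (Submodule.mem_sup_right
        (diag_tz_mem_derived F mu ψ hn2 hn3 one hone_left hone_right hmul i0 _ ?_ a))
        (Submodule.smul_mem _ _ ?_)
      · rw [Matrix.trace_sub, Matrix.trace_smul, trace_single_eq_same, smul_eq_mul,
          mul_one, sub_self]
      · apply Submodule.mem_sup_left
        refine Submodule.subset_span
          ⟨_, diag_tz_mem_derived F mu ψ hn2 hn3 one hone_left hone_right hmul i0
            (Matrix.single z0 z1 1) (trace_single_eq_of_ne _ _ _ (Ne.symm (Ne.symm hz))) a,
           _, diag_tz_mem_derived F mu ψ hn2 hn3 one hone_left hone_right hmul i0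
            (Matrix.single z1 z0 1) (trace_single_eq_of_ne _ _ _ (Ne.symm hz)) (one i0), ?_⟩
        rw [hmul, single_mul_single_same, mul_one, hone_right]
  · exact Submodule.mem_sup_right
      (offdiag_mem_derived F mu ψ one hone_left hone_right hmul hmul0 i j hij X a)

end FinalAux

theorem derived_eq_Lsub
    -- sizes: `n_i ≥ 2`, and `n_i ≥ 3` in characteristic 2
    (hn2 : ∀ i : I, 2 ≤ n i) (hn3 : ringChar F = 2 → ∀ i : I, 3 ≤ n i)
    -- `Λ` is an associative algebra with componentwise products `Λ(i,j)Λ(j,k) ⊆ Λ(i,k)`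
    (hassoc : ∀ (i j k l : Option I) (a : Λ i j) (b : Λ j k) (c : Λ k l),
      mu i k l (mu i j k a b) c = mu i j l a (mu j k l b c))
    -- each `Λ(i,i)`, `i ∈ I`, has an identity element `1_i`
    (one : ∀ i : I, Λ (some i) (some i))
    (hone_left : ∀ (i : I) (j : Option I) (a : Λ (some i) j),
      mu (some i) (some i) j (one i) a = a)
    (hone_right : ∀ (i : I) (j : Option I) (a : Λ j (some i)),
      mu j (some i) (some i) a (one i) = a)
    -- `Λ(0,0) = Σ_{i ∈ I} Λ(0,i)Λ(i,0)`
    (h00 : ∀ x : Λ none none, x ∈ Submodule.span F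
      {y : Λ none none | ∃ (i : I) (a : Λ none (some i)) (b : Λ (some i) none),
        y = mu none (some i) none a b})
    -- the product of `A`: `(X ⊗ λ)(Y ⊗ μ) = XY ⊗ λμ` for matching inner indices …
    (hmul : ∀ (i j k : Option I) (X : Matrix (Fin (nopt n i)) (Fin (nopt n j)) F)
      (a : Λ i j) (Y : Matrix (Fin (nopt n j)) (Fin (nopt n k)) F) (b : Λ j k),
      elt F ψ i j X a * elt F ψ j k Y b = elt F ψ i k (X * Y) (mu i j k a b))
    -- … and `0` otherwise
    (hmul0 : ∀ (i j s t : Option I), j ≠ s →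
      ∀ (X : Matrix (Fin (nopt n i)) (Fin (nopt n j)) F) (a : Λ i j)
        (Y : Matrix (Fin (nopt n s)) (Fin (nopt n t)) F) (b : Λ s t),
      elt F ψ i j X a * elt F ψ s t Y b = 0)
    :
    -- `A⁽¹⁾ = L`; consequently `A⁽¹⁾` is perfect and `A = A⁽¹⁾A⁽¹⁾ + A⁽¹⁾`
    derivedSub F (A := A) = Lsub F ψ ∧
    Submodule.span F {z : A | ∃ x ∈ derivedSub F (A := A), ∃ y ∈ derivedSub F (A := A),
        z = x * y - y * x} = derivedSub F (A := A) ∧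
    Submodule.span F {z : A | ∃ x ∈ derivedSub F (A := A), ∃ y ∈ derivedSub F (A := A),
        z = x * y} ⊔ derivedSub F (A := A) = (⊤ : Submodule F A) := by
  have hDL : derivedSub F (A := A) = Lsub F ψ :=
    le_antisymm (derived_le_Lsub F mu ψ hn2 hassoc h00 hmul hmul0)
      (Lsub_le_derived F mu ψ hn2 hn3 one hone_left hone_right hmul hmul0)
  exact ⟨hDL,
    derived_perfect F mu ψ hn2 hn3 one hone_left hone_right hassoc h00 hmul hmul0,
    prod_sup_derived_eq_top F mu ψ hn2 hn3 one hone_left hone_right hassoc h00 hmul hmul0⟩
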